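/- Let (S_ε, I_ε, R_ε) solve the discrete SIR reaction–diffusion system on the grid D_ε with nonnegative solutions and bounded rates ᾱ = sup α, β̄ = sup β. Then the energy identity for S_ε holds: ‖S_ε(t)‖²_{L²} + 2μ_S ∫₀ᵗ ‖∇⁺_ε S_ε(r)‖²_{L²} dr = ‖S_ε(0)‖²_{L²} - 2∫₀ᵗ ⟨β(·)S_ε(r)I_ε(r)/A_ε(r), S_ε(r)⟩ dr, where A_ε = S_ε + I_ε + R_ε. Consequently (combining with the analogous identities for I_ε, R_ε and Gronwall's lemma) there is a constant C, independent of ε, such that sup_{0≤t≤T}(‖S_ε(t)‖²_{L²} + ‖I_ε(t)‖²_{L²} + ‖R_ε(t)‖²_{L²}) + 2∫₀ᵀ (μ_S‖∇⁺_ε S_ε(r)‖²_{L²} + μ_I‖∇⁺_ε I_ε(r)‖²_{L²} + μ_R‖∇⁺_ε R_ε(r)‖²_{L²}) dr ≤ C. -/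

import Mathlib

noncomputable section
open Real Function Set intervalIntegral MeasureTheory

def IsStep (n : ℕ) (f : ℝ → ℝ) : Prop :=
  ∀ j : ℤ, ∀ x ∈ Set.Ico ((j : ℝ) / n - 1 / (2 * n)) ((j : ℝ) / n + 1 / (2 * n)),
    f x = f ((j : ℝ) / n)

def inner01 (f g : ℝ → ℝ) : ℝ := ∫ x in (0 : ℝ)..1, f x * g x

def gradP (n : ℕ) (f : ℝ → ℝ) (x : ℝ) : ℝ := (n : ℝ) * (f (x + (n : ℝ)⁻¹) - f x)

def lapE (n : ℕ) (f : ℝ → ℝ) (x : ℝ) : ℝ :=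
  (n : ℝ) ^ 2 * (f (x + (n : ℝ)⁻¹) - 2 * f x + f (x - (n : ℝ)⁻¹))

lemma isStep_mul {n : ℕ} {f g : ℝ → ℝ} (hf : IsStep n f) (hg : IsStep n g) :
    IsStep n (fun x => f x * g x) := fun j x hx => by
  simp only [hf j x hx, hg j x hx]

lemma isStep_gradP {n : ℕ} (hn : 0 < n) {f : ℝ → ℝ} (hf : IsStep n f) :
    IsStep n (gradP n f) := by
  intro j x hx
  have hn' : (n : ℝ) ≠ 0 := Nat.cast_ne_zero.2 hn.ne'
  have e : ((j + 1 : ℤ) : ℝ) / n = (j : ℝ) / n + (n : ℝ)⁻¹ := by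
    push_cast; field_simp
  have h1 : x + (n : ℝ)⁻¹ ∈
      Set.Ico (((j + 1 : ℤ) : ℝ) / n - 1 / (2 * n)) (((j + 1 : ℤ) : ℝ) / n + 1 / (2 * n)) := by
    obtain ⟨hx1, hx2⟩ := hx
    constructor
    · rw [e]; linarith
    · rw [e]; linarith
  have h2 : (j : ℝ) / n + (n : ℝ)⁻¹ ∈
      Set.Ico (((j + 1 : ℤ) : ℝ) / n - 1 / (2 * n)) (((j + 1 : ℤ) : ℝ) / n + 1 / (2 * n)) := by
    rw [e]
    constructor
    · have : 0 < 1 / (2 * (n : ℝ)) := by positivity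
      linarith
    · have : 0 < 1 / (2 * (n : ℝ)) := by positivity
      linarith
  simp only [gradP, hf _ _ h1, hf _ _ h2, hf j x hx]

lemma periodic_gradP {n : ℕ} {f : ℝ → ℝ} (hf : Periodic f 1) :
    Periodic (gradP n f) 1 := by
  intro x
  simp only [gradP]
  have : x + 1 + (n : ℝ)⁻¹ = x + (n : ℝ)⁻¹ + 1 := by ring
  rw [this, hf, hf]


lemma integral_step_eq_sum {n : ℕ} (hn : 0 < n) {h : ℝ → ℝ} (hp : Periodic h 1)
    (hs : IsStep n h) :
    ∫ x in (0:ℝ)..1, h x = (n : ℝ)⁻¹ * ∑ j ∈ Finset.range n, h ((j : ℝ) / n) := by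
  have hn0 : (0:ℝ) < n := Nat.cast_pos.2 hn
  have hn' : (n:ℝ) ≠ 0 := hn0.ne'
  set a : ℕ → ℝ := fun k => (k : ℝ) / n - 1 / (2 * n) with ha
  have hlt : ∀ k : ℕ, a k < a (k + 1) := by
    intro k
    simp only [ha]
    push_cast
    have : (0:ℝ) < (n:ℝ)⁻¹ := by positivity
    have e : ((k:ℝ) + 1) / n = (k:ℝ)/n + (n:ℝ)⁻¹ := by field_simp
    linarith [e]
  have hdiff : ∀ k : ℕ, a (k + 1) - a k = (n:ℝ)⁻¹ := by
    intro k
    simp only [ha]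
    push_cast
    field_simp
    ring
  have hcell : ∀ k : ℕ, ∀ x ∈ Set.Ico (a k) (a (k + 1)), h x = h ((k : ℝ) / n) := by
    intro k x hx
    have hmem : x ∈ Set.Ico (((k:ℤ) : ℝ) / n - 1 / (2 * n)) (((k:ℤ) : ℝ) / n + 1 / (2 * n)) := by
      obtain ⟨h1, h2⟩ := hx
      simp only [ha] at h1 h2
      push_cast at h1 h2 ⊢
      constructor
      · linarith
      · have e : ((k:ℝ) + 1) / n - 1 / (2 * n) = (k:ℝ)/n + 1/(2*n) := by field_simp; ring
        linarith [e ▸ h2]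
    have := hs (k : ℤ) x hmem
    push_cast at this
    exact this
  have hae : ∀ k : ℕ, ∀ᵐ x, x ∈ Set.uIoc (a k) (a (k + 1)) → h x = h ((k : ℝ) / n) := by
    intro k
    have hne : ∀ᵐ x : ℝ, x ≠ a (k + 1) := by
      rw [ae_iff]
      simp only [not_not, Set.setOf_eq_eq_singleton]
      exact Real.volume_singleton
    filter_upwards [hne] with x hx hmem
    rw [Set.uIoc_of_le (hlt k).le] at hmem
    exact hcell k x ⟨hmem.1.le, lt_of_le_of_ne hmem.2 hx⟩
  have hint : ∀ k : ℕ, IntervalIntegrable h volume (a k) (a (k + 1)) := by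
    intro k
    refine (intervalIntegrable_const (c := h ((k : ℝ) / n))).congr_ae ?_
    have := (ae_restrict_iff' measurableSet_uIoc).2 (hae k)
    filter_upwards [this] with x hx
    exact hx.symm
  have hpiece : ∀ k : ℕ, ∫ x in (a k)..(a (k + 1)), h x = (n:ℝ)⁻¹ * h ((k : ℝ) / n) := by
    intro k
    rw [intervalIntegral.integral_congr_ae (hae k), intervalIntegral.integral_const,
      smul_eq_mul, hdiff k]
  have hsum := intervalIntegral.sum_integral_adjacent_intervals
    (f := h) (μ := volume) (a := a) (n := n) (fun k _ => hint k)
  have han : a n = a 0 + 1 := by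
    simp only [ha]
    push_cast
    field_simp
    ring
  have hshift : ∫ x in (0:ℝ)..1, h x = ∫ x in (a 0)..(a n), h x := by
    have := hp.intervalIntegral_add_eq 0 (a 0)
    rw [zero_add] at this
    rw [han]
    exact this
  rw [hshift, ← hsum, Finset.mul_sum]
  exact Finset.sum_congr rfl fun k _ => hpiece k

lemma sum_range_eq_sum_zmod {n : ℕ} [NeZero n] (F : ℕ → ℝ) :
    ∑ j ∈ Finset.range n, F j = ∑ j : ZMod n, F j.val := by
  refine Finset.sum_nbij' (i := fun (j : ℕ) => (j : ZMod n)) (j := fun (j : ZMod n) => j.val)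
    ?_ ?_ ?_ ?_ ?_
  · intro a _; exact Finset.mem_univ _
  · intro a _; exact Finset.mem_range.2 (ZMod.val_lt a)
  · intro a ha; exact ZMod.val_cast_of_lt (Finset.mem_range.1 ha)
  · intro a _; exact ZMod.natCast_rightInverse a
  · intro a ha; rw [ZMod.val_cast_of_lt (Finset.mem_range.1 ha)]

lemma sbp {n : ℕ} [NeZero n] (a : ZMod n → ℝ) :
    ∑ j : ZMod n, (a (j + 1) - 2 * a j + a (j - 1)) * a j
      = -∑ j : ZMod n, (a (j + 1) - a j) ^ 2 := by
  have e1 : ∑ j : ZMod n, a (j + 1) * a (j + 1) = ∑ j : ZMod n, a j * a j :=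
    Fintype.sum_equiv (Equiv.addRight 1) _ _ (fun j => by simp)
  have e2 : ∑ j : ZMod n, a (j - 1) * a j = ∑ j : ZMod n, a j * a (j + 1) := by
    refine Fintype.sum_equiv (Equiv.subRight 1) _ _ (fun j => ?_)
    simp
  have key : ∑ j : ZMod n, ((a (j + 1) - 2 * a j + a (j - 1)) * a j + (a (j + 1) - a j) ^ 2)
      = ∑ j : ZMod n, ((a (j + 1) * a (j + 1) - a j * a j) + (a (j - 1) * a j - a j * a (j + 1))) :=
    Finset.sum_congr rfl fun j _ => by ring
  rw [Finset.sum_add_distrib] at key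
  rw [Finset.sum_add_distrib, Finset.sum_sub_distrib, Finset.sum_sub_distrib] at key
  rw [e1, e2] at key
  linarith [key]

lemma zmod_grid {n : ℕ} [NeZero n] {f : ℝ → ℝ} (hf : Periodic f 1) (m : ℤ) :
    f (((ZMod.val (m : ZMod n) : ℕ) : ℝ) / n) = f ((m : ℝ) / n) := by
  have hn0 : (0:ℝ) < n := Nat.cast_pos.2 (Nat.pos_of_ne_zero (NeZero.ne n))
  have hv : ((ZMod.val (m : ZMod n) : ℕ) : ℤ) = m % n := ZMod.val_intCast m
  have : ((ZMod.val (m : ZMod n) : ℕ) : ℝ) / n = (m : ℝ) / n + (-(m / n) : ℤ) * 1 := by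
    have hm : (m % n : ℤ) = m - n * (m / n) := Int.emod_def m n
    rw [show ((ZMod.val (m : ZMod n) : ℕ) : ℝ) = ((m % n : ℤ) : ℝ) by exact_mod_cast congrArg (fun z : ℤ => (z : ℝ)) hv]
    rw [hm]
    push_cast
    field_simp
    ring
  rw [this, hf.int_mul (-(m / n))]

lemma grid_shift {n : ℕ} [NeZero n] {f : ℝ → ℝ} (hf : Periodic f 1) (j : ZMod n) (z : ℤ) :
    f ((((j + (z : ZMod n)).val : ℕ) : ℝ) / n) = f ((((j.val : ℤ) + z : ℤ) : ℝ) / n) := by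
  have e : j + (z : ZMod n) = ((((j.val : ℤ) + z : ℤ)) : ZMod n) := by
    push_cast
    rw [ZMod.natCast_rightInverse j]
  rw [e, zmod_grid hf]

lemma lap_sum_eq {n : ℕ} (hn : 0 < n) {f : ℝ → ℝ} (hf : Periodic f 1) :
    ∑ j ∈ Finset.range n, lapE n f ((j : ℝ) / n) * f ((j : ℝ) / n)
      = -∑ j ∈ Finset.range n, gradP n f ((j : ℝ) / n) * gradP n f ((j : ℝ) / n) := by
  haveI : NeZero n := ⟨hn.ne'⟩
  have hn' : (n : ℝ) ≠ 0 := Nat.cast_ne_zero.2 hn.ne'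
  rw [sum_range_eq_sum_zmod (fun j => lapE n f ((j : ℝ) / n) * f ((j : ℝ) / n)),
    sum_range_eq_sum_zmod (fun j => gradP n f ((j : ℝ) / n) * gradP n f ((j : ℝ) / n))]
  set a : ZMod n → ℝ := fun j => f ((j.val : ℝ) / n) with ha
  have hup : ∀ j : ZMod n, f ((j.val : ℝ) / n + (n : ℝ)⁻¹) = a (j + 1) := by
    intro j
    have h1 : a (j + 1) = f ((((j.val : ℤ) + 1 : ℤ) : ℝ) / n) := by
      have := grid_shift (n := n) hf j 1
      simpa only [Int.cast_one] using this
    rw [h1]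
    congr 1
    push_cast
    field_simp
  have hdn : ∀ j : ZMod n, f ((j.val : ℝ) / n - (n : ℝ)⁻¹) = a (j - 1) := by
    intro j
    have h1 : a (j - 1) = f ((((j.val : ℤ) - 1 : ℤ) : ℝ) / n) := by
      have := grid_shift (n := n) hf j (-1)
      simpa only [Int.cast_neg, Int.cast_one, ← sub_eq_add_neg] using this
    rw [h1]
    congr 1
    push_cast
    field_simp
  have e1 : ∑ j : ZMod n, lapE n f ((j.val : ℝ) / n) * f ((j.val : ℝ) / n)
      = (n : ℝ) ^ 2 * ∑ j : ZMod n, (a (j + 1) - 2 * a j + a (j - 1)) * a j := by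
    rw [Finset.mul_sum]
    refine Finset.sum_congr rfl fun j _ => ?_
    simp only [lapE, hup j, hdn j]
    ring
  have e2 : ∑ j : ZMod n, gradP n f ((j.val : ℝ) / n) * gradP n f ((j.val : ℝ) / n)
      = (n : ℝ) ^ 2 * ∑ j : ZMod n, (a (j + 1) - a j) ^ 2 := by
    rw [Finset.mul_sum]
    refine Finset.sum_congr rfl fun j _ => ?_
    simp only [gradP, hup j]
    ring
  rw [e1, e2, sbp a]
  ring

lemma hasDerivAt_inner01_sq {n : ℕ} (hn : 0 < n) (U : ℝ → ℝ → ℝ) (V : ℝ → ℝ) (t : ℝ)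
    (hUper : ∀ s, Periodic (U s) 1) (hUstep : ∀ s, IsStep n (U s))
    (hd : ∀ j ∈ Finset.range n, HasDerivAt (fun s => U s ((j : ℝ) / n)) (V ((j : ℝ) / n)) t) :
    HasDerivAt (fun s => inner01 (U s) (U s))
      ((n : ℝ)⁻¹ * ∑ j ∈ Finset.range n, 2 * V ((j : ℝ) / n) * U t ((j : ℝ) / n)) t := by
  have hrepr : ∀ s, inner01 (U s) (U s)
      = (n : ℝ)⁻¹ * ∑ j ∈ Finset.range n, U s ((j : ℝ) / n) * U s ((j : ℝ) / n) :=
    fun s => integral_step_eq_sum hn ((hUper s).mul (hUper s))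
      (isStep_mul (hUstep s) (hUstep s))
  have h1 : HasDerivAt
      (fun s => (n : ℝ)⁻¹ * ∑ j ∈ Finset.range n, U s ((j : ℝ) / n) * U s ((j : ℝ) / n))
      ((n : ℝ)⁻¹ * ∑ j ∈ Finset.range n,
        (V ((j : ℝ) / n) * U t ((j : ℝ) / n) + U t ((j : ℝ) / n) * V ((j : ℝ) / n))) t :=
    (HasDerivAt.fun_sum fun j hj => (hd j hj).fun_mul (hd j hj)).const_mul _
  have hfun : (fun s => (n : ℝ)⁻¹ * ∑ j ∈ Finset.range n, U s ((j : ℝ) / n) * U s ((j : ℝ) / n))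
      = fun s => inner01 (U s) (U s) := funext fun s => (hrepr s).symm
  have hval : (n : ℝ)⁻¹ * ∑ j ∈ Finset.range n,
        (V ((j : ℝ) / n) * U t ((j : ℝ) / n) + U t ((j : ℝ) / n) * V ((j : ℝ) / n))
      = (n : ℝ)⁻¹ * ∑ j ∈ Finset.range n, 2 * V ((j : ℝ) / n) * U t ((j : ℝ) / n) := by
    congr 1
    exact Finset.sum_congr rfl fun j _ => by ring
  rw [hfun, hval] at h1
  exact h1


set_option maxHeartbeats 1600000 in
/-- Energy identity and uniform (in `ε`) a priori bound for the discrete SIR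
reaction–diffusion system. -/
theorem stmt10 (μS μI μR αbar βbar T K : ℝ)
    (hμS : 0 < μS) (hμI : 0 < μI) (hμR : 0 < μR)
    (hαbar : 0 ≤ αbar) (hβbar : 0 ≤ βbar) (hT : 0 < T) (hK : 0 ≤ K) :
    ∃ C : ℝ, ∀ n : ℕ, 0 < n →
      ∀ (S I R : ℝ → ℝ → ℝ) (α β : ℝ → ℝ),
      (∀ t, Periodic (S t) 1 ∧ IsStep n (S t)) →
      (∀ t, Periodic (I t) 1 ∧ IsStep n (I t)) →
      (∀ t, Periodic (R t) 1 ∧ IsStep n (R t)) →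
      Periodic α 1 → IsStep n α → Periodic β 1 → IsStep n β →
      (∀ x, 0 ≤ α x ∧ α x ≤ αbar) → (∀ x, 0 ≤ β x ∧ β x ≤ βbar) →
      (∀ t x, 0 ≤ S t x) → (∀ t x, 0 ≤ I t x) → (∀ t x, 0 ≤ R t x) →
      (∀ t x, 0 < S t x + I t x + R t x) →
      inner01 (S 0) (S 0) + inner01 (I 0) (I 0) + inner01 (R 0) (R 0) ≤ K →
      (∀ t ∈ Icc (0 : ℝ) T, ∀ x, HasDerivAt (fun s => S s x)
          (μS * lapE n (S t) x
            - β x * S t x * I t x / (S t x + I t x + R t x)) t) →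
      (∀ t ∈ Icc (0 : ℝ) T, ∀ x, HasDerivAt (fun s => I s x)
          (μI * lapE n (I t) x
            + β x * S t x * I t x / (S t x + I t x + R t x) - α x * I t x) t) →
      (∀ t ∈ Icc (0 : ℝ) T, ∀ x, HasDerivAt (fun s => R s x)
          (μR * lapE n (R t) x + α x * I t x) t) →
      -- energy identity for `S_ε`:
      (∀ t ∈ Icc (0 : ℝ) T,
        inner01 (S t) (S t)
            + 2 * μS * ∫ r in (0 : ℝ)..t, inner01 (gradP n (S r)) (gradP n (S r))
          = inner01 (S 0) (S 0)
            - 2 * ∫ r in (0 : ℝ)..t,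
                inner01 (fun x => β x * S r x * I r x / (S r x + I r x + R r x)) (S r)) ∧
      -- uniform bound:
      (∀ t ∈ Icc (0 : ℝ) T,
        inner01 (S t) (S t) + inner01 (I t) (I t) + inner01 (R t) (R t)
          + 2 * (∫ r in (0 : ℝ)..T,
              (μS * inner01 (gradP n (S r)) (gradP n (S r))
                + μI * inner01 (gradP n (I r)) (gradP n (I r))
                + μR * inner01 (gradP n (R r)) (gradP n (R r)))) ≤ C) := by
  classical
  set c0 : ℝ := 2 * βbar + αbar with hc0def
  have hc0 : 0 ≤ c0 := by rw [hc0def]; linarith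
  set M : ℝ := K * Real.exp (c0 * T) with hMdef
  have hMnn : 0 ≤ M := by rw [hMdef]; positivity
  refine ⟨M + K + T * (c0 * M), ?_⟩
  intro n hn S I R α β hS hI hR hαper hαstep hβper hβstep hαb hβb hSnn hInn hRnn hA hK0
    hS' hI' hR'
  haveI : NeZero n := ⟨hn.ne'⟩
  have hnR : (0:ℝ) < n := Nat.cast_pos.2 hn
  have hnI : (0:ℝ) ≤ (n:ℝ)⁻¹ := by positivity
  have pS : ∀ t, Periodic (S t) 1 := fun t => (hS t).1
  have sS : ∀ t, IsStep n (S t) := fun t => (hS t).2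
  have pI : ∀ t, Periodic (I t) 1 := fun t => (hI t).1
  have sI : ∀ t, IsStep n (I t) := fun t => (hI t).2
  have pR : ∀ t, Periodic (R t) 1 := fun t => (hR t).1
  have sR : ∀ t, IsStep n (R t) := fun t => (hR t).2
  have hinner : ∀ f g : ℝ → ℝ, Periodic f 1 → IsStep n f → Periodic g 1 → IsStep n g →
      inner01 f g = (n:ℝ)⁻¹ * ∑ j ∈ Finset.range n, f ((j : ℝ) / n) * g ((j : ℝ) / n) :=
    fun f g pf sf pg sg => integral_step_eq_sum hn (pf.mul pg) (isStep_mul sf sg)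
  -- periodicity/step of auxiliary space functions
  have reactper : ∀ r, Periodic (fun x => β x * S r x * I r x / (S r x + I r x + R r x)) 1 := by
    intro r x
    simp only [hβper x, pS r x, pI r x, pR r x]
  have reactstep : ∀ r, IsStep n (fun x => β x * S r x * I r x / (S r x + I r x + R r x)) := by
    intro r j x hx
    simp only [hβstep j x hx, sS r j x hx, sI r j x hx, sR r j x hx]
  have aIper : ∀ r, Periodic (fun x => α x * I r x) 1 := fun r => hαper.mul (pI r)
  have aIstep : ∀ r, IsStep n (fun x => α x * I r x) := fun r => isStep_mul hαstep (sI r)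
  -- names for the relevant functionals
  set FS : ℝ → ℝ := fun t => inner01 (S t) (S t) with hFS
  set FI : ℝ → ℝ := fun t => inner01 (I t) (I t) with hFI
  set FR : ℝ → ℝ := fun t => inner01 (R t) (R t) with hFR
  set GS : ℝ → ℝ := fun r => inner01 (gradP n (S r)) (gradP n (S r)) with hGS
  set GI : ℝ → ℝ := fun r => inner01 (gradP n (I r)) (gradP n (I r)) with hGI
  set GR : ℝ → ℝ := fun r => inner01 (gradP n (R r)) (gradP n (R r)) with hGR
  set HS : ℝ → ℝ := fun r =>
    inner01 (fun x => β x * S r x * I r x / (S r x + I r x + R r x)) (S r) with hHS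
  set HI2 : ℝ → ℝ := fun r =>
    inner01 (fun x => β x * S r x * I r x / (S r x + I r x + R r x)) (I r) with hHI2
  set AI : ℝ → ℝ := fun r => inner01 (fun x => α x * I r x) (I r) with hAI
  set AR : ℝ → ℝ := fun r => inner01 (fun x => α x * I r x) (R r) with hAR
  set Phi : ℝ → ℝ := fun t => FS t + FI t + FR t with hPhi
  set DD : ℝ → ℝ := fun r => μS * GS r + μI * GI r + μR * GR r with hDD
  set B : ℝ → ℝ := fun r => -(2 * HS r) + 2 * HI2 r - 2 * AI r + 2 * AR r with hB
  -- sum representations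
  have repFS : ∀ t, FS t = (n:ℝ)⁻¹ * ∑ j ∈ Finset.range n, S t ((j : ℝ) / n) * S t ((j : ℝ) / n) :=
    fun t => hinner _ _ (pS t) (sS t) (pS t) (sS t)
  have repFI : ∀ t, FI t = (n:ℝ)⁻¹ * ∑ j ∈ Finset.range n, I t ((j : ℝ) / n) * I t ((j : ℝ) / n) :=
    fun t => hinner _ _ (pI t) (sI t) (pI t) (sI t)
  have repFR : ∀ t, FR t = (n:ℝ)⁻¹ * ∑ j ∈ Finset.range n, R t ((j : ℝ) / n) * R t ((j : ℝ) / n) :=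
    fun t => hinner _ _ (pR t) (sR t) (pR t) (sR t)
  have repGS : ∀ t, GS t = (n:ℝ)⁻¹ * ∑ j ∈ Finset.range n,
      gradP n (S t) ((j : ℝ) / n) * gradP n (S t) ((j : ℝ) / n) :=
    fun t => hinner _ _ (periodic_gradP (pS t)) (isStep_gradP hn (sS t))
      (periodic_gradP (pS t)) (isStep_gradP hn (sS t))
  have repGI : ∀ t, GI t = (n:ℝ)⁻¹ * ∑ j ∈ Finset.range n,
      gradP n (I t) ((j : ℝ) / n) * gradP n (I t) ((j : ℝ) / n) :=
    fun t => hinner _ _ (periodic_gradP (pI t)) (isStep_gradP hn (sI t))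
      (periodic_gradP (pI t)) (isStep_gradP hn (sI t))
  have repGR : ∀ t, GR t = (n:ℝ)⁻¹ * ∑ j ∈ Finset.range n,
      gradP n (R t) ((j : ℝ) / n) * gradP n (R t) ((j : ℝ) / n) :=
    fun t => hinner _ _ (periodic_gradP (pR t)) (isStep_gradP hn (sR t))
      (periodic_gradP (pR t)) (isStep_gradP hn (sR t))
  have repHS : ∀ t, HS t = (n:ℝ)⁻¹ * ∑ j ∈ Finset.range n, (β ((j : ℝ) / n) * S t ((j : ℝ) / n) * I t ((j : ℝ) / n) / (S t ((j : ℝ) / n) + I t ((j : ℝ) / n) + R t ((j : ℝ) / n))) * S t ((j : ℝ) / n) :=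
    fun t => hinner _ _ (reactper t) (reactstep t) (pS t) (sS t)
  have repHI2 : ∀ t, HI2 t = (n:ℝ)⁻¹ * ∑ j ∈ Finset.range n, (β ((j : ℝ) / n) * S t ((j : ℝ) / n) * I t ((j : ℝ) / n) / (S t ((j : ℝ) / n) + I t ((j : ℝ) / n) + R t ((j : ℝ) / n))) * I t ((j : ℝ) / n) :=
    fun t => hinner _ _ (reactper t) (reactstep t) (pI t) (sI t)
  have repAI : ∀ t, AI t = (n:ℝ)⁻¹ * ∑ j ∈ Finset.range n, (α ((j : ℝ) / n) * I t ((j : ℝ) / n)) * I t ((j : ℝ) / n) :=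
    fun t => hinner _ _ (aIper t) (aIstep t) (pI t) (sI t)
  have repAR : ∀ t, AR t = (n:ℝ)⁻¹ * ∑ j ∈ Finset.range n, (α ((j : ℝ) / n) * I t ((j : ℝ) / n)) * R t ((j : ℝ) / n) :=
    fun t => hinner _ _ (aIper t) (aIstep t) (pR t) (sR t)
  -- nonnegativity
  have hFSnn : ∀ t, 0 ≤ FS t := fun t => by
    rw [repFS t]
    exact mul_nonneg hnI (Finset.sum_nonneg fun j _ => mul_self_nonneg _)
  have hFInn : ∀ t, 0 ≤ FI t := fun t => by
    rw [repFI t]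
    exact mul_nonneg hnI (Finset.sum_nonneg fun j _ => mul_self_nonneg _)
  have hFRnn : ∀ t, 0 ≤ FR t := fun t => by
    rw [repFR t]
    exact mul_nonneg hnI (Finset.sum_nonneg fun j _ => mul_self_nonneg _)
  have hGSnn : ∀ t, 0 ≤ GS t := fun t => by
    rw [repGS t]
    exact mul_nonneg hnI (Finset.sum_nonneg fun j _ => mul_self_nonneg _)
  have hGInn : ∀ t, 0 ≤ GI t := fun t => by
    rw [repGI t]
    exact mul_nonneg hnI (Finset.sum_nonneg fun j _ => mul_self_nonneg _)
  have hGRnn : ∀ t, 0 ≤ GR t := fun t => by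
    rw [repGR t]
    exact mul_nonneg hnI (Finset.sum_nonneg fun j _ => mul_self_nonneg _)
  have hHSnn : ∀ t, 0 ≤ HS t := fun t => by
    rw [repHS t]
    refine mul_nonneg hnI (Finset.sum_nonneg fun j _ => mul_nonneg ?_ (hSnn t _))
    exact div_nonneg (mul_nonneg (mul_nonneg (hβb _).1 (hSnn t _)) (hInn t _))
      (hA t ((j : ℝ) / n)).le
  have hAInn : ∀ t, 0 ≤ AI t := fun t => by
    rw [repAI t]
    exact mul_nonneg hnI (Finset.sum_nonneg fun j _ =>
      mul_nonneg (mul_nonneg (hαb _).1 (hInn t _)) (hInn t _))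
  have hPhinn : ∀ t, 0 ≤ Phi t := fun t => by
    have h1 := hFSnn t; have h2 := hFInn t; have h3 := hFRnn t
    simp only [hPhi]
    linarith
  -- comparison estimates
  have hHI2le : ∀ t, HI2 t ≤ βbar * FI t := by
    intro t
    have hterm : ∀ j ∈ Finset.range n,
        (β ((j : ℝ) / n) * S t ((j : ℝ) / n) * I t ((j : ℝ) / n) / (S t ((j : ℝ) / n) + I t ((j : ℝ) / n) + R t ((j : ℝ) / n))) * I t ((j : ℝ) / n) ≤ βbar * (I t ((j : ℝ) / n) * I t ((j : ℝ) / n)) := by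
      intro j _
      have hAx := hA t ((j : ℝ) / n)
      have hb1 := (hβb ((j : ℝ) / n)).1
      have hb2 := (hβb ((j : ℝ) / n)).2
      have hs := hSnn t ((j : ℝ) / n)
      have hi := hInn t ((j : ℝ) / n)
      have hr := hRnn t ((j : ℝ) / n)
      have hq : β ((j : ℝ) / n) * S t ((j : ℝ) / n) * I t ((j : ℝ) / n) / (S t ((j : ℝ) / n) + I t ((j : ℝ) / n) + R t ((j : ℝ) / n)) ≤ βbar * I t ((j : ℝ) / n) := by
        rw [div_le_iff₀ hAx]
        nlinarith [mul_nonneg hs hi, mul_nonneg hi hi, mul_nonneg hi hr,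
          mul_nonneg (sub_nonneg.2 hb2) (mul_nonneg hs hi)]
      calc (β ((j : ℝ) / n) * S t ((j : ℝ) / n) * I t ((j : ℝ) / n) / (S t ((j : ℝ) / n) + I t ((j : ℝ) / n) + R t ((j : ℝ) / n))) * I t ((j : ℝ) / n) ≤ (βbar * I t ((j : ℝ) / n)) * I t ((j : ℝ) / n) :=
            mul_le_mul_of_nonneg_right hq hi
        _ = βbar * (I t ((j : ℝ) / n) * I t ((j : ℝ) / n)) := by ring
    calc HI2 t = (n:ℝ)⁻¹ * ∑ j ∈ Finset.range n, (β ((j : ℝ) / n) * S t ((j : ℝ) / n) * I t ((j : ℝ) / n) / (S t ((j : ℝ) / n) + I t ((j : ℝ) / n) + R t ((j : ℝ) / n))) * I t ((j : ℝ) / n) := repHI2 t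
      _ ≤ (n:ℝ)⁻¹ * ∑ j ∈ Finset.range n, βbar * (I t ((j : ℝ) / n) * I t ((j : ℝ) / n)) :=
          mul_le_mul_of_nonneg_left (Finset.sum_le_sum hterm) hnI
      _ = βbar * FI t := by rw [repFI t, ← Finset.mul_sum]; ring
  have hARle : ∀ t, AR t ≤ αbar / 2 * FI t + αbar / 2 * FR t := by
    intro t
    have hterm : ∀ j ∈ Finset.range n,
        (α ((j : ℝ) / n) * I t ((j : ℝ) / n)) * R t ((j : ℝ) / n)
          ≤ αbar / 2 * (I t ((j : ℝ) / n) * I t ((j : ℝ) / n)) + αbar / 2 * (R t ((j : ℝ) / n) * R t ((j : ℝ) / n)) := by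
      intro j _
      have ha1 := (hαb ((j : ℝ) / n)).1
      have ha2 := (hαb ((j : ℝ) / n)).2
      have hi := hInn t ((j : ℝ) / n)
      have hr := hRnn t ((j : ℝ) / n)
      nlinarith [sq_nonneg (I t ((j : ℝ) / n) - R t ((j : ℝ) / n)), mul_nonneg hi hr,
        mul_nonneg (sub_nonneg.2 ha2) (mul_nonneg hi hr)]
    calc AR t = (n:ℝ)⁻¹ * ∑ j ∈ Finset.range n, (α ((j : ℝ) / n) * I t ((j : ℝ) / n)) * R t ((j : ℝ) / n) := repAR t
      _ ≤ (n:ℝ)⁻¹ * ∑ j ∈ Finset.range n,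
            (αbar / 2 * (I t ((j : ℝ) / n) * I t ((j : ℝ) / n)) + αbar / 2 * (R t ((j : ℝ) / n) * R t ((j : ℝ) / n))) :=
          mul_le_mul_of_nonneg_left (Finset.sum_le_sum hterm) hnI
      _ = αbar / 2 * FI t + αbar / 2 * FR t := by
          rw [repFI t, repFR t, Finset.sum_add_distrib, ← Finset.mul_sum, ← Finset.mul_sum]
          ring
  have hBle : ∀ t, B t ≤ c0 * Phi t := by
    intro t
    simp only [hB, hPhi, hc0def]
    have h1 := hHSnn t
    have h2 := hHI2le t
    have h3 := hAInn t
    have h4 := hARle t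
    have h5 := hFSnn t
    have h6 := hFInn t
    have h7 := hFRnn t
    nlinarith
  -- time continuity of grid values
  have cS : ∀ y, ContinuousOn (fun t => S t y) (Icc 0 T) :=
    fun y t ht => (hS' t ht y).continuousAt.continuousWithinAt
  have cI : ∀ y, ContinuousOn (fun t => I t y) (Icc 0 T) :=
    fun y t ht => (hI' t ht y).continuousAt.continuousWithinAt
  have cR : ∀ y, ContinuousOn (fun t => R t y) (Icc 0 T) :=
    fun y t ht => (hR' t ht y).continuousAt.continuousWithinAt
  -- continuity of the functionals
  have cGS : ContinuousOn GS (Icc 0 T) := by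
    have hrepr : GS = fun t => (n:ℝ)⁻¹ * ∑ j ∈ Finset.range n,
        ((n:ℝ) * (S t ((j : ℝ) / n + (n:ℝ)⁻¹) - S t ((j : ℝ) / n))) *
          ((n:ℝ) * (S t ((j : ℝ) / n + (n:ℝ)⁻¹) - S t ((j : ℝ) / n))) := funext fun t => repGS t
    rw [hrepr]
    exact continuousOn_const.mul (continuousOn_finset_sum _ fun j _ =>
      ((continuousOn_const.mul ((cS _).sub (cS _))).mul
        (continuousOn_const.mul ((cS _).sub (cS _)))))
  have cGI : ContinuousOn GI (Icc 0 T) := by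
    have hrepr : GI = fun t => (n:ℝ)⁻¹ * ∑ j ∈ Finset.range n,
        ((n:ℝ) * (I t ((j : ℝ) / n + (n:ℝ)⁻¹) - I t ((j : ℝ) / n))) *
          ((n:ℝ) * (I t ((j : ℝ) / n + (n:ℝ)⁻¹) - I t ((j : ℝ) / n))) := funext fun t => repGI t
    rw [hrepr]
    exact continuousOn_const.mul (continuousOn_finset_sum _ fun j _ =>
      ((continuousOn_const.mul ((cI _).sub (cI _))).mul
        (continuousOn_const.mul ((cI _).sub (cI _)))))
  have cGR : ContinuousOn GR (Icc 0 T) := by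
    have hrepr : GR = fun t => (n:ℝ)⁻¹ * ∑ j ∈ Finset.range n,
        ((n:ℝ) * (R t ((j : ℝ) / n + (n:ℝ)⁻¹) - R t ((j : ℝ) / n))) *
          ((n:ℝ) * (R t ((j : ℝ) / n + (n:ℝ)⁻¹) - R t ((j : ℝ) / n))) := funext fun t => repGR t
    rw [hrepr]
    exact continuousOn_const.mul (continuousOn_finset_sum _ fun j _ =>
      ((continuousOn_const.mul ((cR _).sub (cR _))).mul
        (continuousOn_const.mul ((cR _).sub (cR _)))))
  have cHS : ContinuousOn HS (Icc 0 T) := by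
    have hrepr : HS = fun t => (n:ℝ)⁻¹ * ∑ j ∈ Finset.range n, (β ((j : ℝ) / n) * S t ((j : ℝ) / n) * I t ((j : ℝ) / n) / (S t ((j : ℝ) / n) + I t ((j : ℝ) / n) + R t ((j : ℝ) / n))) * S t ((j : ℝ) / n) :=
      funext fun t => repHS t
    rw [hrepr]
    refine continuousOn_const.mul (continuousOn_finset_sum _ fun j _ => ?_)
    exact ((((continuousOn_const.mul (cS _)).mul (cI _)).div
      (((cS _).add (cI _)).add (cR _)) (fun t ht => (hA t _).ne')).mul (cS _))
  have cHI2 : ContinuousOn HI2 (Icc 0 T) := by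
    have hrepr : HI2 = fun t => (n:ℝ)⁻¹ * ∑ j ∈ Finset.range n, (β ((j : ℝ) / n) * S t ((j : ℝ) / n) * I t ((j : ℝ) / n) / (S t ((j : ℝ) / n) + I t ((j : ℝ) / n) + R t ((j : ℝ) / n))) * I t ((j : ℝ) / n) :=
      funext fun t => repHI2 t
    rw [hrepr]
    refine continuousOn_const.mul (continuousOn_finset_sum _ fun j _ => ?_)
    exact ((((continuousOn_const.mul (cS _)).mul (cI _)).div
      (((cS _).add (cI _)).add (cR _)) (fun t ht => (hA t _).ne')).mul (cI _))
  have cAI : ContinuousOn AI (Icc 0 T) := by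
    have hrepr : AI = fun t => (n:ℝ)⁻¹ * ∑ j ∈ Finset.range n, (α ((j : ℝ) / n) * I t ((j : ℝ) / n)) * I t ((j : ℝ) / n) :=
      funext fun t => repAI t
    rw [hrepr]
    exact continuousOn_const.mul (continuousOn_finset_sum _ fun j _ =>
      ((continuousOn_const.mul (cI _)).mul (cI _)))
  have cAR : ContinuousOn AR (Icc 0 T) := by
    have hrepr : AR = fun t => (n:ℝ)⁻¹ * ∑ j ∈ Finset.range n, (α ((j : ℝ) / n) * I t ((j : ℝ) / n)) * R t ((j : ℝ) / n) :=
      funext fun t => repAR t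
    rw [hrepr]
    exact continuousOn_const.mul (continuousOn_finset_sum _ fun j _ =>
      ((continuousOn_const.mul (cI _)).mul (cR _)))
  have cDD : ContinuousOn DD (Icc 0 T) := by
    rw [hDD]
    exact ((continuousOn_const.mul cGS).add (continuousOn_const.mul cGI)).add
      (continuousOn_const.mul cGR)
  have cB : ContinuousOn B (Icc 0 T) := by
    rw [hB]
    exact ((((continuousOn_const.mul cHS).neg.add (continuousOn_const.mul cHI2)).sub
      (continuousOn_const.mul cAI)).add (continuousOn_const.mul cAR))
  -- derivatives of the energies
  have hdFS : ∀ t ∈ Icc (0:ℝ) T, HasDerivAt FS (-(2 * μS * GS t) - 2 * HS t) t := by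
    intro t ht
    have h0 : HasDerivAt (fun s => inner01 (S s) (S s))
        ((n:ℝ)⁻¹ * ∑ j ∈ Finset.range n,
          2 * (μS * lapE n (S t) ((j : ℝ) / n) - (β ((j : ℝ) / n) * S t ((j : ℝ) / n) * I t ((j : ℝ) / n) / (S t ((j : ℝ) / n) + I t ((j : ℝ) / n) + R t ((j : ℝ) / n)))) * S t ((j : ℝ) / n)) t :=
      hasDerivAt_inner01_sq hn S
        (fun y => μS * lapE n (S t) y - β y * S t y * I t y / (S t y + I t y + R t y)) t
        pS sS (fun j _ => hS' t ht ((j : ℝ) / n))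
    have e : (n:ℝ)⁻¹ * ∑ j ∈ Finset.range n,
          2 * (μS * lapE n (S t) ((j : ℝ) / n) - (β ((j : ℝ) / n) * S t ((j : ℝ) / n) * I t ((j : ℝ) / n) / (S t ((j : ℝ) / n) + I t ((j : ℝ) / n) + R t ((j : ℝ) / n)))) * S t ((j : ℝ) / n)
        = -(2 * μS * GS t) - 2 * HS t := by
      rw [repGS t, repHS t]
      have e2 : ∑ j ∈ Finset.range n,
            2 * (μS * lapE n (S t) ((j : ℝ) / n) - (β ((j : ℝ) / n) * S t ((j : ℝ) / n) * I t ((j : ℝ) / n) / (S t ((j : ℝ) / n) + I t ((j : ℝ) / n) + R t ((j : ℝ) / n)))) * S t ((j : ℝ) / n)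
          = 2 * μS * ∑ j ∈ Finset.range n, lapE n (S t) ((j : ℝ) / n) * S t ((j : ℝ) / n)
            - 2 * ∑ j ∈ Finset.range n, (β ((j : ℝ) / n) * S t ((j : ℝ) / n) * I t ((j : ℝ) / n) / (S t ((j : ℝ) / n) + I t ((j : ℝ) / n) + R t ((j : ℝ) / n))) * S t ((j : ℝ) / n) := by
        rw [Finset.mul_sum, Finset.mul_sum, ← Finset.sum_sub_distrib]
        exact Finset.sum_congr rfl fun j _ => by ring
      rw [e2, lap_sum_eq hn (pS t)]
      ring
    rw [e] at h0
    exact h0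
  have hdFI : ∀ t ∈ Icc (0:ℝ) T,
      HasDerivAt FI (-(2 * μI * GI t) + 2 * HI2 t - 2 * AI t) t := by
    intro t ht
    have h0 : HasDerivAt (fun s => inner01 (I s) (I s))
        ((n:ℝ)⁻¹ * ∑ j ∈ Finset.range n,
          2 * (μI * lapE n (I t) ((j : ℝ) / n) + (β ((j : ℝ) / n) * S t ((j : ℝ) / n) * I t ((j : ℝ) / n) / (S t ((j : ℝ) / n) + I t ((j : ℝ) / n) + R t ((j : ℝ) / n))) - α ((j : ℝ) / n) * I t ((j : ℝ) / n)) * I t ((j : ℝ) / n)) t :=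
      hasDerivAt_inner01_sq hn I
        (fun y => μI * lapE n (I t) y + β y * S t y * I t y / (S t y + I t y + R t y)
          - α y * I t y) t
        pI sI (fun j _ => hI' t ht ((j : ℝ) / n))
    have e : (n:ℝ)⁻¹ * ∑ j ∈ Finset.range n,
          2 * (μI * lapE n (I t) ((j : ℝ) / n) + (β ((j : ℝ) / n) * S t ((j : ℝ) / n) * I t ((j : ℝ) / n) / (S t ((j : ℝ) / n) + I t ((j : ℝ) / n) + R t ((j : ℝ) / n))) - α ((j : ℝ) / n) * I t ((j : ℝ) / n)) * I t ((j : ℝ) / n)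
        = -(2 * μI * GI t) + 2 * HI2 t - 2 * AI t := by
      rw [repGI t, repHI2 t, repAI t]
      have e2 : ∑ j ∈ Finset.range n,
            2 * (μI * lapE n (I t) ((j : ℝ) / n) + (β ((j : ℝ) / n) * S t ((j : ℝ) / n) * I t ((j : ℝ) / n) / (S t ((j : ℝ) / n) + I t ((j : ℝ) / n) + R t ((j : ℝ) / n))) - α ((j : ℝ) / n) * I t ((j : ℝ) / n)) * I t ((j : ℝ) / n)
          = 2 * μI * ∑ j ∈ Finset.range n, lapE n (I t) ((j : ℝ) / n) * I t ((j : ℝ) / n)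
            + 2 * ∑ j ∈ Finset.range n, (β ((j : ℝ) / n) * S t ((j : ℝ) / n) * I t ((j : ℝ) / n) / (S t ((j : ℝ) / n) + I t ((j : ℝ) / n) + R t ((j : ℝ) / n))) * I t ((j : ℝ) / n)
            - 2 * ∑ j ∈ Finset.range n, (α ((j : ℝ) / n) * I t ((j : ℝ) / n)) * I t ((j : ℝ) / n) := by
        rw [Finset.mul_sum, Finset.mul_sum, Finset.mul_sum, ← Finset.sum_add_distrib,
          ← Finset.sum_sub_distrib]
        exact Finset.sum_congr rfl fun j _ => by ring
      rw [e2, lap_sum_eq hn (pI t)]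
      ring
    rw [e] at h0
    exact h0
  have hdFR : ∀ t ∈ Icc (0:ℝ) T,
      HasDerivAt FR (-(2 * μR * GR t) + 2 * AR t) t := by
    intro t ht
    have h0 : HasDerivAt (fun s => inner01 (R s) (R s))
        ((n:ℝ)⁻¹ * ∑ j ∈ Finset.range n,
          2 * (μR * lapE n (R t) ((j : ℝ) / n) + α ((j : ℝ) / n) * I t ((j : ℝ) / n)) * R t ((j : ℝ) / n)) t :=
      hasDerivAt_inner01_sq hn R
        (fun y => μR * lapE n (R t) y + α y * I t y) t
        pR sR (fun j _ => hR' t ht ((j : ℝ) / n))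
    have e : (n:ℝ)⁻¹ * ∑ j ∈ Finset.range n,
          2 * (μR * lapE n (R t) ((j : ℝ) / n) + α ((j : ℝ) / n) * I t ((j : ℝ) / n)) * R t ((j : ℝ) / n)
        = -(2 * μR * GR t) + 2 * AR t := by
      rw [repGR t, repAR t]
      have e2 : ∑ j ∈ Finset.range n,
            2 * (μR * lapE n (R t) ((j : ℝ) / n) + α ((j : ℝ) / n) * I t ((j : ℝ) / n)) * R t ((j : ℝ) / n)
          = 2 * μR * ∑ j ∈ Finset.range n, lapE n (R t) ((j : ℝ) / n) * R t ((j : ℝ) / n)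
            + 2 * ∑ j ∈ Finset.range n, (α ((j : ℝ) / n) * I t ((j : ℝ) / n)) * R t ((j : ℝ) / n) := by
        rw [Finset.mul_sum, Finset.mul_sum, ← Finset.sum_add_distrib]
        exact Finset.sum_congr rfl fun j _ => by ring
      rw [e2, lap_sum_eq hn (pR t)]
      ring
    rw [e] at h0
    exact h0
  have hdPhi : ∀ t ∈ Icc (0:ℝ) T, HasDerivAt Phi (-(2 * DD t) + B t) t := by
    intro t ht
    have h := ((hdFS t ht).add (hdFI t ht)).add (hdFR t ht)
    have e : -(2 * μS * GS t) - 2 * HS t + (-(2 * μI * GI t) + 2 * HI2 t - 2 * AI t)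
        + (-(2 * μR * GR t) + 2 * AR t) = -(2 * DD t) + B t := by
      simp only [hDD, hB]
      ring
    rw [e] at h
    exact h
  -- energy identity for S
  have EIS : ∀ t ∈ Icc (0:ℝ) T,
      FS t + 2 * μS * (∫ r in (0:ℝ)..t, GS r) = FS 0 - 2 * ∫ r in (0:ℝ)..t, HS r := by
    intro t ht
    have husub : uIcc (0:ℝ) t ⊆ Icc 0 T := by
      rw [uIcc_of_le ht.1]
      exact Icc_subset_Icc le_rfl ht.2
    have hiGS : IntervalIntegrable GS volume 0 t := (cGS.mono husub).intervalIntegrable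
    have hiHS : IntervalIntegrable HS volume 0 t := (cHS.mono husub).intervalIntegrable
    have hderiv : ∀ r ∈ uIcc (0:ℝ) t, HasDerivAt FS (-(2 * μS * GS r) - 2 * HS r) r :=
      fun r hr => hdFS r (husub hr)
    have hi1 : IntervalIntegrable (fun r => -(2 * μS * GS r)) volume 0 t :=
      (hiGS.const_mul (2 * μS)).neg
    have hi2 : IntervalIntegrable (fun r => 2 * HS r) volume 0 t := hiHS.const_mul 2
    have hint : IntervalIntegrable (fun r => -(2 * μS * GS r) - 2 * HS r) volume 0 t :=
      hi1.sub hi2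
    have key := intervalIntegral.integral_eq_sub_of_hasDerivAt hderiv hint
    have split : (∫ r in (0:ℝ)..t, (-(2 * μS * GS r) - 2 * HS r))
        = -(2 * μS * ∫ r in (0:ℝ)..t, GS r) - 2 * ∫ r in (0:ℝ)..t, HS r := by
      rw [intervalIntegral.integral_sub hi1 hi2, intervalIntegral.integral_neg,
        intervalIntegral.integral_const_mul, intervalIntegral.integral_const_mul]
    rw [split] at key
    linarith [key]
  -- Gronwall bound
  have cPhi : ContinuousOn Phi (Icc 0 T) :=
    fun t ht => (hdPhi t ht).continuousAt.continuousWithinAt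
  have cexp : Continuous fun t : ℝ => Real.exp (-c0 * t) := by continuity
  have hpsid : ∀ t ∈ Icc (0:ℝ) T, HasDerivAt (fun t => Phi t * Real.exp (-c0 * t))
      ((-(2 * DD t) + B t) * Real.exp (-c0 * t) + Phi t * (Real.exp (-c0 * t) * -c0)) t := by
    intro t ht
    have h1 : HasDerivAt (fun t : ℝ => -c0 * t) (-c0) t := by
      simpa using (hasDerivAt_id t).const_mul (-c0)
    have hexp : HasDerivAt (fun t : ℝ => Real.exp (-c0 * t))
        (Real.exp (-c0 * t) * -c0) t := h1.exp
    exact (hdPhi t ht).mul hexp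
  have hanti : AntitoneOn (fun t => Phi t * Real.exp (-c0 * t)) (Icc 0 T) := by
    refine antitoneOn_of_deriv_nonpos (convex_Icc 0 T)
      (cPhi.mul cexp.continuousOn) ?_ ?_
    · intro t ht
      rw [interior_Icc] at ht
      exact (hpsid t (Ioo_subset_Icc_self ht)).differentiableAt.differentiableWithinAt
    · intro t ht
      rw [interior_Icc] at ht
      rw [(hpsid t (Ioo_subset_Icc_self ht)).deriv]
      have h1 := hBle t
      have h2 : 0 ≤ DD t := by
        have g1 := mul_nonneg hμS.le (hGSnn t)
        have g2 := mul_nonneg hμI.le (hGInn t)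
        have g3 := mul_nonneg hμR.le (hGRnn t)
        simp only [hDD]
        linarith
      have h3 : 0 < Real.exp (-c0 * t) := Real.exp_pos _
      nlinarith
  have hPhile : ∀ t ∈ Icc (0:ℝ) T, Phi t ≤ M := by
    intro t ht
    have h1 : Phi t * Real.exp (-c0 * t) ≤ Phi 0 * Real.exp (-c0 * 0) :=
      hanti (left_mem_Icc.2 hT.le) ht ht.1
    have hE : Real.exp (-c0 * t) * Real.exp (c0 * t) = 1 := by
      rw [← Real.exp_add]
      simp
    have h2 : Phi t ≤ Phi 0 * Real.exp (c0 * t) := by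
      have h3 := mul_le_mul_of_nonneg_right h1 (Real.exp_pos (c0 * t)).le
      calc Phi t = Phi t * (Real.exp (-c0 * t) * Real.exp (c0 * t)) := by rw [hE, mul_one]
        _ = Phi t * Real.exp (-c0 * t) * Real.exp (c0 * t) := by ring
        _ ≤ Phi 0 * Real.exp (-c0 * 0) * Real.exp (c0 * t) := h3
        _ = Phi 0 * Real.exp (c0 * t) := by simp
    have hPhi0K : Phi 0 ≤ K := by
      simp only [hPhi, hFS, hFI, hFR]
      exact hK0
    have hPhi0nn : 0 ≤ Phi 0 := hPhinn 0
    have hexple : Real.exp (c0 * t) ≤ Real.exp (c0 * T) :=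
      Real.exp_le_exp.2 (mul_le_mul_of_nonneg_left ht.2 hc0)
    calc Phi t ≤ Phi 0 * Real.exp (c0 * t) := h2
      _ ≤ K * Real.exp (c0 * T) :=
        mul_le_mul hPhi0K hexple (Real.exp_pos _).le hK
      _ = M := hMdef.symm
  -- FTC for Phi on [0, T]
  have husubT : uIcc (0:ℝ) T ⊆ Icc 0 T := by rw [uIcc_of_le hT.le]
  have hiDD : IntervalIntegrable DD volume 0 T := (cDD.mono husubT).intervalIntegrable
  have hiB : IntervalIntegrable B volume 0 T := (cB.mono husubT).intervalIntegrable
  have hi3 : IntervalIntegrable (fun r => -(2 * DD r)) volume 0 T := (hiDD.const_mul 2).neg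
  have key2 := intervalIntegral.integral_eq_sub_of_hasDerivAt
    (f := Phi) (f' := fun r => -(2 * DD r) + B r)
    (fun r hr => hdPhi r (husubT hr))
    (hi3.add hiB)
  have split2 : (∫ r in (0:ℝ)..T, (-(2 * DD r) + B r))
      = -(2 * ∫ r in (0:ℝ)..T, DD r) + ∫ r in (0:ℝ)..T, B r := by
    rw [intervalIntegral.integral_add hi3 hiB,
      intervalIntegral.integral_neg, intervalIntegral.integral_const_mul]
  rw [split2] at key2
  have hBint_le : (∫ r in (0:ℝ)..T, B r) ≤ T * (c0 * M) := by
    have h1 : (∫ r in (0:ℝ)..T, B r) ≤ ∫ r in (0:ℝ)..T, c0 * M :=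
      intervalIntegral.integral_mono_on hT.le hiB intervalIntegrable_const
        (fun r hr => le_trans (hBle r) (mul_le_mul_of_nonneg_left (hPhile r hr) hc0))
    rw [intervalIntegral.integral_const, smul_eq_mul, sub_zero] at h1
    exact h1
  have hDDbound : 2 * (∫ r in (0:ℝ)..T, DD r) ≤ K + T * (c0 * M) := by
    have h1 := hPhinn T
    have h2 : Phi 0 ≤ K := by
      simp only [hPhi, hFS, hFI, hFR]; exact hK0
    linarith [key2, hBint_le]
  -- conclusion
  constructor
  · intro t ht
    have := EIS t ht
    simp only [hFS, hGS, hHS] at this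
    exact this
  · intro t ht
    have hb : Phi t + 2 * (∫ r in (0:ℝ)..T, DD r) ≤ M + K + T * (c0 * M) := by
      have := hPhile t ht
      linarith
    simp only [hPhi, hFS, hFI, hFR, hDD, hGS, hGI, hGR] at hb
    exact hb
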